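/- The weighted initial part of a product of fractional power series polynomials is the product of their weighted initial parts: in_τ(g·h) = in_τ(g)·in_τ(h). -/

import Mathlib

noncomputable section

open Polynomial

/-- Polynomials in `y` with fractional power series (Hahn series with rational exponents)
coefficients in `x`. -/
abbrev FracPoly := Polynomial (HahnSeries ℚ ℂ)

/-- The set of weights `i + τ·j` (as real numbers) of the monomials `x^i y^j` appearing
in `g`. -/
def wSupp (τ : ℚ) (g : FracPoly) : Set ℝ :=
  {r | ∃ j : ℕ, ∃ i ∈ (g.coeff j).support, r = (i : ℝ) + (τ : ℝ) * j}

/-- The weighted order `ord_τ(g) = min { i + τ·j : a_{ij} ≠ 0 }` (with weights `w(x)=1`,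
`w(y)=τ`), computed as an infimum of real numbers. -/
def ordT (τ : ℚ) (g : FracPoly) : ℝ := sInf (wSupp τ g)

/-- Truncation of a Hahn series retaining only the exponents `i` with `i + τ·j = r`. -/
def truncAt (τ : ℚ) (r : ℝ) (j : ℕ) (a : HahnSeries ℚ ℂ) : HahnSeries ℚ ℂ where
  coeff i := if ((i : ℝ) + (τ : ℝ) * j = r) then a.coeff i else 0
  isPWO_support' := a.isPWO_support.mono (by
    intro i hi
    simp only [Function.mem_support] at hi
    by_cases h : ((i : ℝ) + (τ : ℝ) * j = r) <;> simp [h] at hi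
    exact hi)

/-- The weighted initial part `in_τ(g) = Σ_{i+τj = ord_τ(g)} a_{ij} x^i y^j`. -/
def inT (τ : ℚ) (g : FracPoly) : FracPoly :=
  g.sum fun j a => Polynomial.C (truncAt τ (ordT τ g) j a) * Polynomial.X ^ j

/-- Multiplication of the coefficients of a Hahn series by their exponent:
`Σ aᵢ xⁱ ↦ Σ i·aᵢ xⁱ`. -/
def expMul (a : HahnSeries ℚ ℂ) : HahnSeries ℚ ℂ where
  coeff i := (i : ℂ) * a.coeff i
  isPWO_support' := a.isPWO_support.mono (by
    intro i hi
    simp only [Function.mem_support] at hi ⊢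
    intro h
    simp [h] at hi)

/-- The partial derivative `∂/∂x` on Hahn series: `Σ aᵢ xⁱ ↦ Σ i·aᵢ x^{i-1}`. -/
def derivX (a : HahnSeries ℚ ℂ) : HahnSeries ℚ ℂ :=
  HahnSeries.embDomain (OrderIso.addRight (-1 : ℚ)).toOrderEmbedding (expMul a)

/-- The partial derivative `∂/∂x` applied coefficientwise to a polynomial in `y` with
fractional power series coefficients. -/
def pderivX (h : FracPoly) : FracPoly :=
  h.sum fun n a => Polynomial.C (derivX a) * Polynomial.X ^ n

/-- The Jacobian determinant `jac(f,g) = f_x g_y − f_y g_x`. -/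
def jacF (f g : FracPoly) : FracPoly :=
  pderivX f * Polynomial.derivative g - Polynomial.derivative f * pderivX g

/-! ### Auxiliary machinery for the proof -/

/-- Coefficientwise `Polynomial.C` as a ring hom on Hahn series. -/
def cmapH : HahnSeries ℚ ℂ →+* HahnSeries ℚ (Polynomial ℂ) where
  toFun a := a.map (Polynomial.C : ℂ →+* Polynomial ℂ)
  map_zero' := by ext; simp
  map_one' := by
    ext w
    simp only [HahnSeries.map_coeff, HahnSeries.coeff_one]
    split <;> simp
  map_add' x y := by ext; simp
  map_mul' x y := HahnSeries.map_mul (Polynomial.C : ℂ →+* Polynomial ℂ).toNonUnitalRingHom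

/-- The regrading homomorphism `x^i y^j ↦ t^{i+τ j} Y^j`. -/
def PhiT (τ : ℚ) : FracPoly →+* HahnSeries ℚ (Polynomial ℂ) :=
  Polynomial.eval₂RingHom cmapH (HahnSeries.single τ Polynomial.X)

lemma PhiT_coeff (τ : ℚ) (g : FracPoly) (w : ℚ) (j : ℕ) :
    ((PhiT τ g).coeff w).coeff j = (g.coeff j).coeff (w - τ * j) := by
  have : PhiT τ g = ∑ n ∈ g.support,
      cmapH (g.coeff n) * HahnSeries.single ((n : ℕ) • τ) ((Polynomial.X : Polynomial ℂ) ^ n) := by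
    rw [PhiT, Polynomial.coe_eval₂RingHom, Polynomial.eval₂_eq_sum, Polynomial.sum]
    refine Finset.sum_congr rfl fun n _ => ?_
    rw [HahnSeries.single_pow]
  rw [this]
  have hsum : (∑ n ∈ g.support,
        cmapH (g.coeff n) * HahnSeries.single ((n : ℕ) • τ) ((Polynomial.X : Polynomial ℂ) ^ n)).coeff w
      = ∑ n ∈ g.support,
        (cmapH (g.coeff n) * HahnSeries.single ((n : ℕ) • τ) ((Polynomial.X : Polynomial ℂ) ^ n)).coeff w :=
    map_sum (HahnSeries.coeff.addMonoidHom w) _ _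
  rw [hsum]
  have hterm : ∀ n : ℕ,
      (cmapH (g.coeff n) * HahnSeries.single ((n : ℕ) • τ) ((Polynomial.X : Polynomial ℂ) ^ n)).coeff w
      = Polynomial.C ((g.coeff n).coeff (w - τ * n)) * Polynomial.X ^ n := by
    intro n
    have hw : w = (w - τ * n) + (n : ℕ) • τ := by
      rw [nsmul_eq_mul]; ring
    rw [hw, HahnSeries.coeff_mul_single_add]
    simp only [cmapH, RingHom.coe_mk, MonoidHom.coe_mk, OneHom.coe_mk, HahnSeries.map_coeff,
      ZeroHom.coe_coe]
    congr 2
    rw [nsmul_eq_mul]; ring_nf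
    rfl
  simp only [hterm]
  rw [Polynomial.finset_sum_coeff]
  simp only [Polynomial.coeff_C_mul, Polynomial.coeff_X_pow, mul_ite, mul_one, mul_zero]
  rw [Finset.sum_ite_eq g.support j (fun n => (g.coeff n).coeff (w - τ * n))]
  split
  · rfl
  · next hj =>
    rw [Polynomial.notMem_support_iff.mp hj]
    simp

lemma PhiT_injective (τ : ℚ) : Function.Injective (PhiT τ) := by
  intro g h hgh
  ext j i
  have hg2 := PhiT_coeff τ g (i + τ * j) j
  have hh2 := PhiT_coeff τ h (i + τ * j) j
  rw [hgh] at hg2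
  have := hg2.symm.trans hh2
  simpa using this

lemma PhiT_ne_zero {τ : ℚ} {g : FracPoly} (hg : g ≠ 0) : PhiT τ g ≠ 0 := by
  intro h
  exact hg (PhiT_injective τ (by rw [h, map_zero]))

lemma wSupp_eq (τ : ℚ) (g : FracPoly) :
    wSupp τ g = (fun q : ℚ => (q : ℝ)) '' (PhiT τ g).support := by
  ext r
  constructor
  · rintro ⟨j, i, hi, rfl⟩
    refine ⟨i + τ * j, ?_, by push_cast; ring⟩
    rw [HahnSeries.mem_support]
    intro h0
    have := PhiT_coeff τ g (i + τ * j) j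
    rw [h0] at this
    simp only [Polynomial.coeff_zero] at this
    exact hi (by simpa using this.symm)
  · rintro ⟨q, hq, rfl⟩
    rw [HahnSeries.mem_support] at hq
    obtain ⟨j, hj⟩ : ∃ j, ((PhiT τ g).coeff q).coeff j ≠ 0 := by
      by_contra hc
      push_neg at hc
      exact hq (Polynomial.ext hc)
    rw [PhiT_coeff] at hj
    exact ⟨j, q - τ * j, hj, by push_cast; ring⟩

lemma ordT_eq {τ : ℚ} {g : FracPoly} (hg : g ≠ 0) :
    ordT τ g = (((PhiT τ g).order : ℚ) : ℝ) := by
  rw [ordT, wSupp_eq]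
  refine IsLeast.csInf_eq ⟨⟨(PhiT τ g).order, ?_, rfl⟩, ?_⟩
  · exact (by have := HahnSeries.leadingCoeff_ne_zero.mpr (PhiT_ne_zero (τ := τ) hg); rw [HahnSeries.leadingCoeff_eq] at this; exact this)
  · rintro r ⟨q, hq, rfl⟩
    dsimp only
    exact_mod_cast HahnSeries.order_le_of_coeff_ne_zero hq

lemma inT_coeff (τ : ℚ) (g : FracPoly) (j : ℕ) :
    (inT τ g).coeff j = truncAt τ (ordT τ g) j (g.coeff j) := by
  rw [inT, Polynomial.sum, Polynomial.finset_sum_coeff]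
  simp only [Polynomial.coeff_C_mul, Polynomial.coeff_X_pow, mul_ite, mul_one, mul_zero]
  rw [Finset.sum_ite_eq g.support j (fun n => truncAt τ (ordT τ g) n (g.coeff n))]
  split
  · rfl
  · next hj =>
    rw [Polynomial.notMem_support_iff.mp hj]
    ext i
    simp [truncAt]

lemma PhiT_inT {τ : ℚ} {g : FracPoly} (hg : g ≠ 0) :
    PhiT τ (inT τ g) =
      HahnSeries.single ((PhiT τ g).order) ((PhiT τ g).coeff ((PhiT τ g).order)) := by
  ext1
  funext w
  have hpc : ∀ j : ℕ, ((PhiT τ (inT τ g)).coeff w).coeff j =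
      (if (w : ℝ) = ordT τ g then ((PhiT τ g).coeff w).coeff j else 0) := by
    intro j
    rw [PhiT_coeff, inT_coeff]
    show (if (((w - τ * j : ℚ) : ℝ) + (τ : ℝ) * j = ordT τ g) then
        (g.coeff j).coeff (w - τ * j) else 0) = _
    have hcond : (((w - τ * j : ℚ) : ℝ) + (τ : ℝ) * j = ordT τ g) ↔ ((w : ℝ) = ordT τ g) := by
      constructor <;> intro hx <;> [skip; skip] <;> · push_cast at hx ⊢; linarith
    rw [if_congr hcond rfl rfl, PhiT_coeff]
  have hcond2 : ((w : ℝ) = ordT τ g) ↔ w = (PhiT τ g).order := by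
    rw [ordT_eq hg]
    exact_mod_cast Iff.rfl
  apply Polynomial.ext
  intro j
  show _ = ((HahnSeries.single ((PhiT τ g).order) ((PhiT τ g).coeff ((PhiT τ g).order))).coeff w).coeff j
  rw [hpc j]
  by_cases hw : (w : ℝ) = ordT τ g
  · rw [if_pos hw, hcond2.mp hw, HahnSeries.coeff_single_same]
  · rw [if_neg hw, HahnSeries.coeff_single_of_ne (fun hc => hw (hcond2.mpr hc))]
    simp

/-- The weighted initial part of a product is the product of the weighted initial parts:
`in_τ(g·h) = in_τ(g)·in_τ(h)`. -/
theorem inT_mul (τ : ℚ) (hτ : 0 < τ) (g h : FracPoly)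
    (hsg : ∀ j : ℕ, ∀ i ∈ (g.coeff j).support, 0 ≤ i)
    (hsh : ∀ j : ℕ, ∀ i ∈ (h.coeff j).support, 0 ≤ i)
    (hg : g ≠ 0) (hh : h ≠ 0) :
    inT τ (g * h) = inT τ g * inT τ h := by
  have hg' : PhiT τ g ≠ 0 := PhiT_ne_zero hg
  have hh' : PhiT τ h ≠ 0 := PhiT_ne_zero hh
  have hgh : g * h ≠ 0 := mul_ne_zero hg hh
  apply PhiT_injective τ
  have key : PhiT τ (g * h) = PhiT τ g * PhiT τ h := map_mul _ _ _
  rw [map_mul, PhiT_inT hgh, PhiT_inT hg, PhiT_inT hh, HahnSeries.single_mul_single, key,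
      HahnSeries.order_mul hg' hh', HahnSeries.coeff_mul_order_add_order,
      HahnSeries.leadingCoeff_eq, HahnSeries.leadingCoeff_eq]

end
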